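/- Let 0 ≤ a ≤ α ≤ 1 and let b ≥ 0. If the effect B = (1/2)(1 + b·m·σ) with unit vector m orthogonal to a is coexistent with A = (1/2)(α·1 + a·n·σ) (unit vector n), then coexistence holds if and only if b ≤ (1/2)√((2−α)² − a²) + (1/2)√(α² − a²). -/

import Mathlib

open scoped ComplexOrder RealInnerProductSpace

/-- The vector of Pauli matrices contracted with a real 3-vector: `v · σ`. -/
noncomputable def pauli (v : EuclideanSpace ℝ (Fin 3)) : Matrix (Fin 2) (Fin 2) ℂ :=
  (v 0 : ℂ) • !![0, 1; 1, 0] + (v 1 : ℂ) • !![0, -Complex.I; Complex.I, 0] +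
    (v 2 : ℂ) • !![1, 0; 0, -1]

/-- The qubit effect `(1/2)(α·1 + v·σ)`. -/
noncomputable def qubitEffect (α : ℝ) (v : EuclideanSpace ℝ (Fin 3)) :
    Matrix (Fin 2) (Fin 2) ℂ :=
  (1 / 2 : ℂ) • ((α : ℂ) • (1 : Matrix (Fin 2) (Fin 2) ℂ) + pauli v)

lemma qubitEffect_eq (γ : ℝ) (v : EuclideanSpace ℝ (Fin 3)) :
    qubitEffect γ v = !![((γ : ℂ) + v 2)/2, ((v 0 : ℂ) - v 1 * Complex.I)/2;
      ((v 0 : ℂ) + v 1 * Complex.I)/2, ((γ : ℂ) - v 2)/2] := by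
  unfold qubitEffect pauli
  ext i j
  fin_cases i <;> fin_cases j <;>
    simp [Matrix.one_apply, Matrix.smul_apply] <;> ring

lemma norm_sq_eq (v : EuclideanSpace ℝ (Fin 3)) :
    ‖v‖^2 = (v 0)^2 + (v 1)^2 + (v 2)^2 := by
  rw [EuclideanSpace.norm_eq, Real.sq_sqrt (by positivity)]
  simp [Fin.sum_univ_three, sq_abs]

lemma quad_key (g v0 v1 v2 P Q R S : ℝ) (h0 : 0 ≤ g) (hs : v0^2+v1^2+v2^2 ≤ g^2)
    (hPQ : R^2 + S^2 = P*Q) (hp : 0 ≤ P) (hq : 0 ≤ Q) :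
    0 ≤ g*(P+Q) + (2*v0*R+2*v1*S+v2*(P-Q)) := by
  have h5 : (v0^2+v1^2+v2^2)*4*(P*Q-(R^2+S^2)) = 0 := by rw [← hPQ]; ring
  have hid : (v0^2+v1^2+v2^2)*(P+Q)^2 - (2*v0*R+2*v1*S+v2*(P-Q))^2
      = (v0*(2*S)-v1*(2*R))^2 + (v0*(P-Q)-v2*(2*R))^2 + (v1*(P-Q)-v2*(2*S))^2
        + (v0^2+v1^2+v2^2)*4*(P*Q-(R^2+S^2)) := by ring
  have hCS : (2*v0*R+2*v1*S+v2*(P-Q))^2 ≤ g^2*(P+Q)^2 := by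
    nlinarith [hid, h5, sq_nonneg (v0*(2*S)-v1*(2*R)), sq_nonneg (v0*(P-Q)-v2*(2*R)),
      sq_nonneg (v1*(P-Q)-v2*(2*S)), mul_nonneg (sub_nonneg.2 hs) (sq_nonneg (P+Q))]
  have hK : 0 ≤ g*(P+Q) := mul_nonneg h0 (by linarith)
  nlinarith [hCS, hK]

set_option maxHeartbeats 1000000 in
lemma psd_of {γ : ℝ} {v : EuclideanSpace ℝ (Fin 3)} (h : ‖v‖ ≤ γ) :
    (qubitEffect γ v).PosSemidef := by
  have h0 : (0:ℝ) ≤ γ := le_trans (norm_nonneg v) h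
  have hs : (v 0)^2 + (v 1)^2 + (v 2)^2 ≤ γ^2 := by
    rw [← norm_sq_eq]; nlinarith [norm_nonneg v]
  rw [qubitEffect_eq]
  set v0 := v 0; set v1 := v 1; set v2 := v 2
  rw [Matrix.posSemidef_iff_dotProduct_mulVec]
  constructor
  · ext i j
    fin_cases i <;> fin_cases j <;>
      simp [Matrix.conjTranspose_apply, Complex.ext_iff] <;> ring
  · intro x
    rw [Complex.le_def]
    constructor
    · have hre : (dotProduct (star x) ((!![((γ : ℂ) + v2)/2, ((v0 : ℂ) - v1 * Complex.I)/2;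
        ((v0 : ℂ) + v1 * Complex.I)/2, ((γ : ℂ) - v2)/2]).mulVec x)).re
        = (γ*((x 0).re^2+(x 0).im^2+(x 1).re^2+(x 1).im^2)
          + 2*v0*((x 0).re*(x 1).re+(x 0).im*(x 1).im)
          + 2*v1*((x 0).re*(x 1).im-(x 0).im*(x 1).re)
          + v2*((x 0).re^2+(x 0).im^2-(x 1).re^2-(x 1).im^2))/2 := by
        simp [dotProduct, Matrix.mulVec, Fin.sum_univ_two, Complex.add_re,
          Complex.mul_re, Complex.mul_im, Complex.div_re, Complex.div_im, Complex.normSq]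
        ring
      rw [hre]
      simp only [Complex.zero_re]
      have := quad_key γ v0 v1 v2 ((x 0).re^2+(x 0).im^2) ((x 1).re^2+(x 1).im^2)
        ((x 0).re*(x 1).re+(x 0).im*(x 1).im) ((x 0).re*(x 1).im-(x 0).im*(x 1).re)
        h0 hs (by ring) (by positivity) (by positivity)
      linarith
    · simp [dotProduct, Matrix.mulVec, Fin.sum_univ_two, Complex.add_im,
        Complex.mul_re, Complex.mul_im, Complex.div_re, Complex.div_im, Complex.normSq]
      ring

set_option maxHeartbeats 1000000 in
lemma psd_to {γ : ℝ} {v : EuclideanSpace ℝ (Fin 3)} (h : (qubitEffect γ v).PosSemidef) :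
    ‖v‖ ≤ γ := by
  rw [qubitEffect_eq, Matrix.posSemidef_iff_dotProduct_mulVec] at h
  obtain ⟨-, h2⟩ := h
  set v0 := v 0; set v1 := v 1; set v2 := v 2
  set V := Real.sqrt (v0^2+v1^2+v2^2) with hV
  have hV0 : 0 ≤ V := Real.sqrt_nonneg _
  have hV2 : V^2 = v0^2+v1^2+v2^2 := Real.sq_sqrt (by positivity)
  have e0 := (Complex.le_def.mp (h2 ![1,0])).1
  have e1 := (Complex.le_def.mp (h2 ![0,1])).1
  simp [dotProduct, Matrix.mulVec, Fin.sum_univ_two, Complex.add_re,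
    Complex.div_re, Complex.normSq] at e0 e1
  have e2 := (Complex.le_def.mp (h2 ![((V - v2 : ℝ) : ℂ), -((v0 : ℂ) + v1 * Complex.I)])).1
  have he2 : ((dotProduct (star ![((V - v2 : ℝ) : ℂ), -((v0 : ℂ) + v1 * Complex.I)])
      ((!![((γ : ℂ) + v2)/2, ((v0 : ℂ) - v1 * Complex.I)/2;
      ((v0 : ℂ) + v1 * Complex.I)/2, ((γ : ℂ) - v2)/2]).mulVec
        ![((V - v2 : ℝ) : ℂ), -((v0 : ℂ) + v1 * Complex.I)]))).re
      = (γ*((V-v2)^2+v0^2+v1^2) - 2*(V-v2)*(v0^2+v1^2) + v2*((V-v2)^2-v0^2-v1^2))/2 := by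
    simp [dotProduct, Matrix.mulVec, Fin.sum_univ_two, Complex.add_re,
      Complex.mul_re, Complex.mul_im, Complex.div_re, Complex.div_im, Complex.normSq]
    ring
  rw [he2] at e2
  simp only [Complex.zero_re] at e2
  -- e2 : 0 ≤ V*(V-v2)*(γ-V) after simplification using hV2
  have key : 0 ≤ V*(V-v2)*(γ-V) := by nlinarith [e2, hV2]
  have hVv2 : v2 ≤ V := by nlinarith [hV2, abs_nonneg v2]
  have hγV : V ≤ γ := by
    rcases eq_or_lt_of_le hV0 with hV' | hV'
    · linarith [e0, e1]
    rcases eq_or_lt_of_le hVv2 with hv' | hv'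
    · rw [← hv']; linarith [e1]
    nlinarith [key, mul_pos hV' (by linarith : (0:ℝ) < V - v2)]
  have : ‖v‖ = V := by
    rw [EuclideanSpace.norm_eq]
    congr 1
    simp [Fin.sum_univ_three, sq_abs]; rfl
  linarith [this ▸ hγV]

lemma qubitEffect_add (γ₁ γ₂ : ℝ) (v₁ v₂ : EuclideanSpace ℝ (Fin 3)) :
    qubitEffect γ₁ v₁ + qubitEffect γ₂ v₂ = qubitEffect (γ₁+γ₂) (v₁+v₂) := by
  simp only [qubitEffect_eq]
  ext i j
  fin_cases i <;> fin_cases j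
  all_goals simp [Matrix.add_apply, PiLp.add_apply, Complex.ext_iff]
  all_goals try constructor
  all_goals push_cast
  all_goals ring

lemma qubitEffect_two_zero : qubitEffect 2 (0 : EuclideanSpace ℝ (Fin 3)) = 1 := by
  rw [qubitEffect_eq]
  ext i j
  fin_cases i <;> fin_cases j <;> simp [Matrix.one_apply] <;> norm_num

lemma bloch (G : Matrix (Fin 2) (Fin 2) ℂ) (h : G.IsHermitian) :
    G = qubitEffect ((G 0 0).re + (G 1 1).re)
      (!₂[2*(G 1 0).re, 2*(G 1 0).im, (G 0 0).re - (G 1 1).re]) := by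
  have h00 := congrFun (congrFun h.eq 0) 0
  have h11 := congrFun (congrFun h.eq 1) 1
  have h01 := congrFun (congrFun h.eq 0) 1
  simp [Matrix.conjTranspose_apply, Complex.ext_iff] at h00 h11 h01
  rw [qubitEffect_eq]
  ext i j
  fin_cases i <;> fin_cases j
  all_goals simp [Complex.ext_iff]
  all_goals try constructor
  all_goals push_cast
  all_goals try ring_nf
  all_goals try linarith [h00, h11, h01.1, h01.2]

lemma lorentz {x1 x2 y1 y2 : ℝ} (h1 : 0 ≤ x1) (h2 : 0 ≤ x2)
    (hy1 : y1^2 ≤ x1^2) (hy2 : y2^2 ≤ x2^2) :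
    Real.sqrt (x1^2 - y1^2) + Real.sqrt (x2^2 - y2^2) ≤
      Real.sqrt ((x1+x2)^2 - (y1+y2)^2) := by
  have ha1 : |y1| ≤ x1 := by
    have := Real.sqrt_le_sqrt hy1
    rwa [Real.sqrt_sq_eq_abs, Real.sqrt_sq h1] at this
  have ha2 : |y2| ≤ x2 := by
    have := Real.sqrt_le_sqrt hy2
    rwa [Real.sqrt_sq_eq_abs, Real.sqrt_sq h2] at this
  have hxy : 0 ≤ x1*x2 - y1*y2 := by
    nlinarith [le_abs_self (y1*y2), abs_mul y1 y2,
      mul_le_mul ha1 ha2 (abs_nonneg y2) h1]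
  have hAB : (x1^2-y1^2)*(x2^2-y2^2) ≤ (x1*x2-y1*y2)^2 := by nlinarith [sq_nonneg (x1*y2-x2*y1)]
  have hs : Real.sqrt (x1^2-y1^2) * Real.sqrt (x2^2-y2^2) ≤ x1*x2-y1*y2 := by
    rw [← Real.sqrt_mul (by nlinarith)]
    calc Real.sqrt ((x1^2-y1^2)*(x2^2-y2^2)) ≤ Real.sqrt ((x1*x2-y1*y2)^2) :=
          Real.sqrt_le_sqrt hAB
      _ = x1*x2-y1*y2 := Real.sqrt_sq hxy
  rw [show (x1+x2)^2 - (y1+y2)^2 = (x1^2-y1^2) + (x2^2-y2^2) + 2*(x1*x2-y1*y2) by ring]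
  have hA := Real.sqrt_nonneg (x1^2-y1^2)
  have hB := Real.sqrt_nonneg (x2^2-y2^2)
  rw [← Real.sqrt_sq (by positivity : (0:ℝ) ≤ Real.sqrt (x1^2-y1^2) + Real.sqrt (x2^2-y2^2))]
  apply Real.sqrt_le_sqrt
  have e1 : Real.sqrt (x1^2-y1^2)^2 = x1^2-y1^2 := Real.sq_sqrt (by nlinarith)
  have e2 : Real.sqrt (x2^2-y2^2)^2 = x2^2-y2^2 := Real.sq_sqrt (by nlinarith)
  nlinarith [hs, e1, e2]

lemma scalar_forward {a α b u v γ : ℝ} (h1 : a ≤ α)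
    (hγ0 : 0 ≤ γ) (hγ1 : γ ≤ α) (hγ2 : γ ≤ 1) (hγ3 : α ≤ 1 + γ)
    (c1 : u^2 + v^2 ≤ γ^2) (c2 : (a-u)^2 + v^2 ≤ (α-γ)^2)
    (c3 : u^2 + (b-v)^2 ≤ (1-γ)^2) (c4 : (a-u)^2 + (b-v)^2 ≤ (1+γ-α)^2) :
    b ≤ (1/2) * Real.sqrt ((2-α)^2 - a^2) + (1/2) * Real.sqrt (α^2 - a^2) := by
  have l1 : Real.sqrt (γ^2-u^2) + Real.sqrt ((α-γ)^2-(a-u)^2) ≤ Real.sqrt (α^2-a^2) := by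
    have := lorentz hγ0 (by linarith : (0:ℝ) ≤ α - γ)
      (by nlinarith [sq_nonneg v] : u^2 ≤ γ^2) (by nlinarith [sq_nonneg v] : (a-u)^2 ≤ (α-γ)^2)
    convert this using 2 <;> ring
  have l2 : Real.sqrt ((1-γ)^2-u^2) + Real.sqrt ((1+γ-α)^2-(a-u)^2) ≤
      Real.sqrt ((2-α)^2-a^2) := by
    have := lorentz (by linarith : (0:ℝ) ≤ 1-γ) (by linarith : (0:ℝ) ≤ 1+γ-α)
      (by nlinarith [sq_nonneg (b-v)] : u^2 ≤ (1-γ)^2) (by nlinarith [sq_nonneg (b-v)] : (a-u)^2 ≤ (1+γ-α)^2)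
    convert this using 2 <;> ring
  have v1 : v ≤ Real.sqrt (γ^2-u^2) := by
    calc v ≤ |v| := le_abs_self v
      _ = Real.sqrt (v^2) := (Real.sqrt_sq_eq_abs v).symm
      _ ≤ _ := Real.sqrt_le_sqrt (by linarith)
  have v2 : v ≤ Real.sqrt ((α-γ)^2-(a-u)^2) := by
    calc v ≤ |v| := le_abs_self v
      _ = Real.sqrt (v^2) := (Real.sqrt_sq_eq_abs v).symm
      _ ≤ _ := Real.sqrt_le_sqrt (by linarith)
  have w1 : b - v ≤ Real.sqrt ((1-γ)^2-u^2) := by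
    calc b-v ≤ |b-v| := le_abs_self _
      _ = Real.sqrt ((b-v)^2) := (Real.sqrt_sq_eq_abs _).symm
      _ ≤ _ := Real.sqrt_le_sqrt (by linarith)
  have w2 : b - v ≤ Real.sqrt ((1+γ-α)^2-(a-u)^2) := by
    calc b-v ≤ |b-v| := le_abs_self _
      _ = Real.sqrt ((b-v)^2) := (Real.sqrt_sq_eq_abs _).symm
      _ ≤ _ := Real.sqrt_le_sqrt (by linarith)
  linarith

section proj
variable {E : Type*} [NormedAddCommGroup E] [InnerProductSpace ℝ E]

lemma proj_le (n m w : E) (hn : ‖n‖ = 1) (hm : ‖m‖ = 1) (horth : ⟪n, m⟫ = 0) :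
    ⟪n, w⟫^2 + ⟪m, w⟫^2 ≤ ‖w‖^2 := by
  have hnn : ⟪n, n⟫ = 1 := by rw [real_inner_self_eq_norm_sq, hn]; norm_num
  have hmm : ⟪m, m⟫ = 1 := by rw [real_inner_self_eq_norm_sq, hm]; norm_num
  have hmn : ⟪m, n⟫ = 0 := by rw [real_inner_comm]; exact horth
  have h0 : (0:ℝ) ≤ ⟪w - ⟪n, w⟫ • n - ⟪m, w⟫ • m, w - ⟪n, w⟫ • n - ⟪m, w⟫ • m⟫ :=
    real_inner_self_nonneg
  simp only [inner_sub_left, inner_sub_right, real_inner_smul_left, real_inner_smul_right,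
    hnn, hmm, horth, hmn] at h0
  rw [real_inner_self_eq_norm_sq] at h0
  have hc1 : ⟪w, n⟫ = ⟪n, w⟫ := real_inner_comm _ _
  have hc2 : ⟪w, m⟫ = ⟪m, w⟫ := real_inner_comm _ _
  rw [hc1, hc2] at h0
  nlinarith [h0]

lemma norm_comb (n m : E) (hn : ‖n‖ = 1) (hm : ‖m‖ = 1) (horth : ⟪n, m⟫ = 0) (x y : ℝ) :
    ‖x • n + y • m‖^2 = x^2 + y^2 := by
  have hnn : ⟪n, n⟫ = 1 := by rw [real_inner_self_eq_norm_sq, hn]; norm_num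
  have hmm : ⟪m, m⟫ = 1 := by rw [real_inner_self_eq_norm_sq, hm]; norm_num
  have hmn : ⟪m, n⟫ = 0 := by rw [real_inner_comm]; exact horth
  rw [← real_inner_self_eq_norm_sq]
  simp only [inner_add_left, inner_add_right, real_inner_smul_left, real_inner_smul_right,
    hnn, hmm, horth, hmn]
  ring
end proj

lemma qubitEffect_sub (γ₁ γ₂ : ℝ) (v₁ v₂ : EuclideanSpace ℝ (Fin 3)) :
    qubitEffect γ₁ v₁ - qubitEffect γ₂ v₂ = qubitEffect (γ₁-γ₂) (v₁-v₂) := by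
  rw [sub_eq_iff_eq_add, qubitEffect_add]
  rw [show γ₁ - γ₂ + γ₂ = γ₁ by ring, show v₁ - v₂ + v₂ = v₁ by abel]


/-- Effects `A` and `B` are coexistent: there is a four-outcome POVM `(G₁,G₂,G₃,G₄)`
with `A = G₁ + G₂` and `B = G₁ + G₃`. -/
def Coexistent (A B : Matrix (Fin 2) (Fin 2) ℂ) : Prop :=
  ∃ G₁ G₂ G₃ G₄ : Matrix (Fin 2) (Fin 2) ℂ,
    G₁.PosSemidef ∧ G₂.PosSemidef ∧ G₃.PosSemidef ∧ G₄.PosSemidef ∧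
    G₁ + G₂ + G₃ + G₄ = 1 ∧ A = G₁ + G₂ ∧ B = G₁ + G₃

set_option maxHeartbeats 2000000 in
theorem orthogonal_coexistence_criterion (a α b : ℝ) (n m : EuclideanSpace ℝ (Fin 3))
    (hn : ‖n‖ = 1) (hm : ‖m‖ = 1) (horth : ⟪n, m⟫ = 0)
    (h0 : 0 ≤ a) (h1 : a ≤ α) (h2 : α ≤ 1) (hb0 : 0 ≤ b) (hb1 : b ≤ 1) :
    Coexistent (qubitEffect α (a • n)) (qubitEffect 1 (b • m)) ↔
      b ≤ (1 / 2) * Real.sqrt ((2 - α) ^ 2 - a ^ 2) +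
          (1 / 2) * Real.sqrt (α ^ 2 - a ^ 2) := by

  have hnn : ⟪n, n⟫ = 1 := by rw [real_inner_self_eq_norm_sq, hn]; norm_num
  have hmm : ⟪m, m⟫ = 1 := by rw [real_inner_self_eq_norm_sq, hm]; norm_num
  have hmn : ⟪m, n⟫ = 0 := by rw [real_inner_comm]; exact horth
  constructor
  · rintro ⟨G₁, G₂, G₃, G₄, p1, p2, p3, p4, hsum, hA, hB⟩
    set γ := (G₁ 0 0).re + (G₁ 1 1).re with hγ
    set g : EuclideanSpace ℝ (Fin 3) :=
      !₂[2*(G₁ 1 0).re, 2*(G₁ 1 0).im, (G₁ 0 0).re - (G₁ 1 1).re] with hg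
    have hG1 : G₁ = qubitEffect γ g := bloch G₁ p1.1
    have hG2 : G₂ = qubitEffect (α - γ) (a • n - g) := by
      have : G₂ = qubitEffect α (a • n) - G₁ := by rw [hA]; abel
      rw [this, hG1, qubitEffect_sub]
    have hG3 : G₃ = qubitEffect (1 - γ) (b • m - g) := by
      have : G₃ = qubitEffect 1 (b • m) - G₁ := by rw [hB]; abel
      rw [this, hG1, qubitEffect_sub]
    have hG4 : G₄ = qubitEffect (1 + γ - α) (g - a • n - b • m) := by
      have h4 : G₄ = qubitEffect 2 0 - G₁ - G₂ - G₃ := by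
        rw [qubitEffect_two_zero, ← hsum]; abel
      rw [h4, hG1, hG2, hG3, qubitEffect_sub, qubitEffect_sub, qubitEffect_sub]
      rw [show 2 - γ - (α - γ) - (1 - γ) = 1 + γ - α by ring,
        show (0:EuclideanSpace ℝ (Fin 3)) - g - (a • n - g) - (b • m - g) = g - a • n - b • m
          by abel]
    have N1 : ‖g‖ ≤ γ := psd_to (hG1 ▸ p1)
    have N2 : ‖a • n - g‖ ≤ α - γ := psd_to (hG2 ▸ p2)
    have N3 : ‖b • m - g‖ ≤ 1 - γ := psd_to (hG3 ▸ p3)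
    have N4 : ‖g - a • n - b • m‖ ≤ 1 + γ - α := psd_to (hG4 ▸ p4)
    set u := ⟪n, g⟫ with hu
    set v := ⟪m, g⟫ with hv
    have c1 : u^2 + v^2 ≤ γ^2 := by
      have := proj_le n m g hn hm horth
      nlinarith [norm_nonneg g]
    have c2 : (a - u)^2 + v^2 ≤ (α - γ)^2 := by
      have hp := proj_le n m (a • n - g) hn hm horth
      have e1 : ⟪n, a • n - g⟫ = a - u := by
        rw [inner_sub_right, real_inner_smul_right, hnn]; rw [hu]; ring
      have e2 : ⟪m, a • n - g⟫ = -v := by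
        rw [inner_sub_right, real_inner_smul_right, hmn]; rw [hv]; ring
      rw [e1, e2] at hp
      nlinarith [norm_nonneg (a • n - g)]
    have c3 : u^2 + (b - v)^2 ≤ (1 - γ)^2 := by
      have hp := proj_le n m (b • m - g) hn hm horth
      have e1 : ⟪n, b • m - g⟫ = -u := by
        rw [inner_sub_right, real_inner_smul_right, horth]; rw [hu]; ring
      have e2 : ⟪m, b • m - g⟫ = b - v := by
        rw [inner_sub_right, real_inner_smul_right, hmm]; rw [hv]; ring
      rw [e1, e2] at hp
      nlinarith [norm_nonneg (b • m - g)]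
    have c4 : (a - u)^2 + (b - v)^2 ≤ (1 + γ - α)^2 := by
      have hp := proj_le n m (g - a • n - b • m) hn hm horth
      have e1 : ⟪n, g - a • n - b • m⟫ = u - a := by
        rw [inner_sub_right, inner_sub_right, real_inner_smul_right,
          real_inner_smul_right, hnn, horth]; rw [hu]; ring
      have e2 : ⟪m, g - a • n - b • m⟫ = v - b := by
        rw [inner_sub_right, inner_sub_right, real_inner_smul_right,
          real_inner_smul_right, hmm, hmn]; rw [hv]; ring
      rw [e1, e2] at hp
      nlinarith [norm_nonneg (g - a • n - b • m)]
    have hγ0 : 0 ≤ γ := le_trans (norm_nonneg g) N1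
    have hγ1 : γ ≤ α := by linarith [norm_nonneg (a • n - g)]
    have hγ2 : γ ≤ 1 := by linarith [norm_nonneg (b • m - g)]
    have hγ3 : α ≤ 1 + γ := by linarith [norm_nonneg (g - a • n - b • m)]
    linarith [scalar_forward h1 hγ0 hγ1 hγ2 hγ3 c1 c2 c3 c4]
  · intro hb
    set T := Real.sqrt (α^2 - a^2) / 2 with hT
    have ha2 : a^2 ≤ α^2 := by nlinarith
    have hT0 : 0 ≤ T := by positivity
    have hT2 : T^2 = (α^2 - a^2)/4 := by
      rw [hT, div_pow, Real.sq_sqrt (by linarith)]; ring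
    set t := min b T with ht
    have ht0 : 0 ≤ t := le_min hb0 hT0
    have htb : t ≤ b := min_le_left _ _
    have htT : t ≤ T := min_le_right _ _
    have h2a : a^2 ≤ (2-α)^2 := by nlinarith
    have hbt : (b - t)^2 ≤ ((2-α)^2 - a^2)/4 := by
      rcases le_total b T with hc | hc
      · rw [ht, min_eq_left hc]; simp; linarith
      · rw [ht, min_eq_right hc]
        have hW : Real.sqrt ((2-α)^2 - a^2) / 2 ≥ b - T := by
          rw [hT]; linarith
        have hW0 : 0 ≤ b - T := by linarith
        have := Real.sq_sqrt (by linarith : (0:ℝ) ≤ (2-α)^2 - a^2)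
        nlinarith [hW, hW0]
    refine ⟨qubitEffect (α/2) ((a/2) • n + t • m),
      qubitEffect (α/2) ((a/2) • n + (-t) • m),
      qubitEffect (1-α/2) ((-(a/2)) • n + (b-t) • m),
      qubitEffect (1-α/2) ((-(a/2)) • n + (t-b) • m), ?_, ?_, ?_, ?_, ?_, ?_, ?_⟩
    · apply psd_of
      have := norm_comb n m hn hm horth (a/2) t
      nlinarith [norm_nonneg ((a/2) • n + t • m), h1, h0, hT2, htT, ht0]
    · apply psd_of
      have := norm_comb n m hn hm horth (a/2) (-t)
      nlinarith [norm_nonneg ((a/2) • n + (-t) • m), hT2, htT, ht0]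
    · apply psd_of
      have := norm_comb n m hn hm horth (-(a/2)) (b-t)
      nlinarith [norm_nonneg ((-(a/2)) • n + (b-t) • m)]
    · apply psd_of
      have := norm_comb n m hn hm horth (-(a/2)) (t-b)
      nlinarith [norm_nonneg ((-(a/2)) • n + (t-b) • m)]
    · rw [qubitEffect_add, qubitEffect_add, qubitEffect_add]
      rw [show α/2 + α/2 + (1-α/2) + (1-α/2) = 2 by ring]
      rw [show (a/2) • n + t • m + ((a/2) • n + (-t) • m) + ((-(a/2)) • n + (b-t) • m)
          + ((-(a/2)) • n + (t-b) • m) = (0 : EuclideanSpace ℝ (Fin 3)) by module]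
      exact qubitEffect_two_zero
    · rw [qubitEffect_add, show α/2 + α/2 = α by ring,
        show (a/2) • n + t • m + ((a/2) • n + (-t) • m) = a • n by module]
    · rw [qubitEffect_add, show α/2 + (1-α/2) = 1 by ring,
        show (a/2) • n + t • m + ((-(a/2)) • n + (b-t) • m) = b • m by module]
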